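/- arXiv:2004.00782 — 5 statements merged into one kernel-verified Lean document; each statement's English description precedes it below -/
import Mathlib

section
/- Let Ω and Ω' be open subsets of ℂ, let ξ : Ω → ℂ be real-differentiable at a point z ∈ Ω with ξ(z) ∈ Ω', and let h : Ω' → ℂ be real-differentiable at w = ξ(z). Then the composition H = h ∘ ξ is real-differentiable at z and satisfies the pointwise identity |H_z(z)|² + |H_z̄(z)|² = (|h_z(w)|² + |h_z̄(w)|²)·(|ξ_z(z)|² + |ξ_z̄(z)|²) + 4·Re( h_z(w)·conj(h_z̄(w))·ξ_z(z)·ξ_z̄(z) ). -/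
open Complex MeasureTheory Set

/-- Wirtinger derivative `∂f/∂z` via the real Fréchet derivative. -/
noncomputable def wdz (f : ℂ → ℂ) (z : ℂ) : ℂ :=
  (1 / 2 : ℂ) * (fderiv ℝ f z 1 - Complex.I * fderiv ℝ f z Complex.I)

/-- Wirtinger derivative `∂f/∂z̄` via the real Fréchet derivative. -/
noncomputable def wdzbar (f : ℂ → ℂ) (z : ℂ) : ℂ :=
  (1 / 2 : ℂ) * (fderiv ℝ f z 1 + Complex.I * fderiv ℝ f z Complex.I)

/-- Dirichlet energy of `f` on `Ω`. -/
noncomputable def energy (Ω : Set ℂ) (f : ℂ → ℂ) : ℝ :=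
  ∫ z in Ω, ((‖wdz f z‖) ^ 2 + (‖wdzbar f z‖) ^ 2)

/-- A test function on `Ω`: smooth with compact support contained in `Ω`. -/
def IsTestFunction (Ω : Set ℂ) (η : ℂ → ℂ) : Prop :=
  ContDiff ℝ (⊤ : ℕ∞) η ∧ IsCompact (tsupport η) ∧ tsupport η ⊆ Ω

/-- An admissible change of variables of `Ω`: a `C¹` diffeomorphism of `Ω` onto itself
with everywhere positive Jacobian, equal to the identity outside a compact subset of `Ω`. -/
structure IsAdmissibleChange (Ω : Set ℂ) (ξ : ℂ → ℂ) : Prop where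
  contDiffOn : ContDiffOn ℝ 1 ξ Ω
  bijOn : Set.BijOn ξ Ω Ω
  jac_pos : ∀ z ∈ Ω, (‖wdz ξ z‖) ^ 2 - (‖wdzbar ξ z‖) ^ 2 > 0
  eq_id : ∃ K : Set ℂ, IsCompact K ∧ K ⊆ Ω ∧ ∀ z ∉ K, ξ z = z

/-- `h` is Hopf harmonic on `Ω`: `h` is `C¹` and its Hopf product is holomorphic on `Ω`. -/
def IsHopfHarmonic (Ω : Set ℂ) (h : ℂ → ℂ) : Prop :=
  ContDiffOn ℝ 1 h Ω ∧
    DifferentiableOn ℂ (fun z => wdz h z * (starRingEnd ℂ) (wdzbar h z)) Ω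


private lemma clm_expand (L : ℂ →L[ℝ] ℂ) (v : ℂ) :
    L v = (v.re : ℂ) * L 1 + (v.im : ℂ) * L Complex.I := by
  have hv : v = v.re • (1 : ℂ) + v.im • Complex.I := by
    simp [Complex.real_smul, Complex.re_add_im]
  conv_lhs => rw [hv, map_add, L.map_smul, L.map_smul]
  simp [Complex.real_smul]

set_option maxHeartbeats 1000000 in
/-- Chain rule for the Dirichlet integrand under composition. -/
theorem stmt_0 (Ω Ω' : Set ℂ) (hΩ : IsOpen Ω) (hΩ' : IsOpen Ω')
    (ξ h : ℂ → ℂ) (z : ℂ) (hz : z ∈ Ω) (hw : ξ z ∈ Ω')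
    (hξ : DifferentiableAt ℝ ξ z) (hh : DifferentiableAt ℝ h (ξ z)) :
    DifferentiableAt ℝ (h ∘ ξ) z ∧
    (‖wdz (h ∘ ξ) z‖) ^ 2 + (‖wdzbar (h ∘ ξ) z‖) ^ 2 =
      ((‖wdz h (ξ z)‖) ^ 2 + (‖wdzbar h (ξ z)‖) ^ 2) *
        ((‖wdz ξ z‖) ^ 2 + (‖wdzbar ξ z‖) ^ 2) +
      4 * (wdz h (ξ z) * (starRingEnd ℂ) (wdzbar h (ξ z)) * wdz ξ z * wdzbar ξ z).re := by
  have hH : DifferentiableAt ℝ (h ∘ ξ) z := hh.comp z hξ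
  refine ⟨hH, ?_⟩
  have hfd : fderiv ℝ (h ∘ ξ) z = (fderiv ℝ h (ξ z)).comp (fderiv ℝ ξ z) :=
    fderiv_comp z hh hξ
  set a : ℂ := fderiv ℝ ξ z 1 with ha
  set b : ℂ := fderiv ℝ ξ z Complex.I with hb
  set c : ℂ := fderiv ℝ h (ξ z) 1 with hc
  set d : ℂ := fderiv ℝ h (ξ z) Complex.I with hd
  have H1 : fderiv ℝ (h ∘ ξ) z 1 = (a.re : ℂ) * c + (a.im : ℂ) * d := by
    rw [hfd, ContinuousLinearMap.comp_apply]; exact clm_expand _ a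
  have H2 : fderiv ℝ (h ∘ ξ) z Complex.I = (b.re : ℂ) * c + (b.im : ℂ) * d := by
    rw [hfd, ContinuousLinearMap.comp_apply]; exact clm_expand _ b
  have h2 : (1 / 2 : ℂ) = ((1 / 2 : ℝ) : ℂ) := by norm_num
  simp only [wdz, wdzbar, H1, H2, h2, Complex.sq_norm, Complex.normSq_apply]
  simp only [Complex.mul_re, Complex.mul_im, Complex.add_re, Complex.add_im,
    Complex.sub_re, Complex.sub_im, Complex.I_re, Complex.I_im, Complex.ofReal_re,
    Complex.ofReal_im, Complex.one_re, Complex.one_im, Complex.div_re, Complex.div_im,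
    Complex.conj_re, Complex.conj_im, Complex.normSq_apply]
  ring
end

section
/- Let Ω ⊂ ℂ be a bounded open set and let h : Ω → ℂ be C¹ with finite Dirichlet energy, whose Hopf product vanishes identically: h_z(z)·conj(h_z̄(z)) = 0 for every z ∈ Ω. Then no inner variation of h decreases its energy: for every admissible change of variables ξ of Ω, one has E[h] ≤ E[h ∘ ξ]. -/
open Complex MeasureTheory Set

lemma clm_apply_rep (L : ℂ →L[ℝ] ℂ) (v : ℂ) :
    L v = (1/2 : ℂ) * (L 1 - I * L I) * v
        + (1/2 : ℂ) * (L 1 + I * L I) * (starRingEnd ℂ) v := by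
  have hv : L v = (v.re : ℂ) * L 1 + (v.im : ℂ) * L I := by
    have h0 : v = (v.re : ℝ) • (1:ℂ) + (v.im : ℝ) • (I:ℂ) := by
      simp [Complex.real_smul, Complex.re_add_im]
    conv_lhs => rw [h0]
    rw [map_add, L.map_smul, L.map_smul, Complex.real_smul, Complex.real_smul]
  have hc : (starRingEnd ℂ) v = (v.re : ℂ) - (v.im : ℂ) * I := by
    simp [Complex.ext_iff]
  have hv2 : v = (v.re : ℂ) + (v.im : ℂ) * I := (Complex.re_add_im v).symm
  rw [hv, hc]
  nth_rewrite 3 [hv2]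
  linear_combination ((v.im : ℂ) * L I) * Complex.I_sq

lemma det_clm (M : ℂ →L[ℝ] ℂ) :
    M.det = (M 1).re * (M I).im - (M I).re * (M 1).im := by
  have : (M : ℂ →ₗ[ℝ] ℂ).det
      = Matrix.det (LinearMap.toMatrix Complex.basisOneI Complex.basisOneI M) :=
    (LinearMap.det_toMatrix _ _).symm
  rw [ContinuousLinearMap.det, this, Matrix.det_fin_two]
  simp [LinearMap.toMatrix_apply, Complex.coe_basisOneI_repr, Complex.coe_basisOneI]

lemma half_normSq : Complex.normSq (1/2 : ℂ) = 1/4 := by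
  have : (1/2 : ℂ) = ((1/2 : ℝ) : ℂ) := by norm_num
  rw [this, Complex.normSq_ofReal]; norm_num

lemma jac_eq_det (ξ : ℂ → ℂ) (z : ℂ) :
    (‖wdz ξ z‖)^2 - (‖wdzbar ξ z‖)^2 = (fderiv ℝ ξ z).det := by
  rw [det_clm]
  simp only [wdz, wdzbar, Complex.sq_norm, Complex.normSq_mul, half_normSq,
    Complex.normSq_apply, Complex.sub_re, Complex.sub_im, Complex.add_re, Complex.add_im,
    Complex.mul_re, Complex.mul_im, Complex.I_re, Complex.I_im,
    show ((1:ℂ)/2).re = 1/2 by norm_num, show ((1:ℂ)/2).im = 0 by norm_num]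
  ring

lemma wdz_comp {h ξ : ℂ → ℂ} {z : ℂ}
    (hh : DifferentiableAt ℝ h (ξ z)) (hξ : DifferentiableAt ℝ ξ z) :
    wdz (h ∘ ξ) z = wdz h (ξ z) * wdz ξ z + wdzbar h (ξ z) * (starRingEnd ℂ) (wdzbar ξ z) ∧
    wdzbar (h ∘ ξ) z = wdz h (ξ z) * wdzbar ξ z + wdzbar h (ξ z) * (starRingEnd ℂ) (wdz ξ z) := by
  have hf : fderiv ℝ (h ∘ ξ) z = (fderiv ℝ h (ξ z)).comp (fderiv ℝ ξ z) :=
    fderiv_comp z hh hξ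
  set L := fderiv ℝ h (ξ z) with hL
  set M := fderiv ℝ ξ z with hM
  have e1 : fderiv ℝ (h ∘ ξ) z 1 = L (M 1) := by rw [hf]; rfl
  have eI : fderiv ℝ (h ∘ ξ) z I = L (M I) := by rw [hf]; rfl
  have r1 := clm_apply_rep L (M 1)
  have rI := clm_apply_rep L (M I)
  constructor <;>
  · simp only [wdz, wdzbar, e1, eI, r1, rI, map_mul, map_add, map_sub, map_one,
      Complex.conj_I, map_div₀, map_ofNat]
    ring

lemma key_alg (p q a b : ℂ) (hpq : p * (starRingEnd ℂ) q = 0) :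
    Complex.normSq (p*a + q*(starRingEnd ℂ) b) + Complex.normSq (p*b + q*(starRingEnd ℂ) a)
    = (Complex.normSq p + Complex.normSq q) * (Complex.normSq a + Complex.normSq b) := by
  have h1 : (p*a) * (starRingEnd ℂ) (q * (starRingEnd ℂ) b) = 0 := by
    rw [map_mul, Complex.conj_conj]; linear_combination (a*b) * hpq
  have h2 : (p*b) * (starRingEnd ℂ) (q * (starRingEnd ℂ) a) = 0 := by
    rw [map_mul, Complex.conj_conj]; linear_combination (a*b) * hpq
  rw [Complex.normSq_add, Complex.normSq_add, h1, h2]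
  simp only [Complex.normSq_mul, Complex.normSq_conj, Complex.zero_re, mul_zero, add_zero]
  ring

lemma wdz_contOn {Ω : Set ℂ} (hΩo : IsOpen Ω) {f : ℂ → ℂ} (hf : ContDiffOn ℝ 1 f Ω) :
    ContinuousOn (fun z => wdz f z) Ω ∧ ContinuousOn (fun z => wdzbar f z) Ω := by
  have hc : ContinuousOn (fderiv ℝ f) Ω := hf.continuousOn_fderiv_of_isOpen hΩo le_rfl
  have h1 : ContinuousOn (fun z => fderiv ℝ f z 1) Ω :=
    (ContinuousLinearMap.apply ℝ ℂ (1:ℂ)).continuous.comp_continuousOn hc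
  have hI : ContinuousOn (fun z => fderiv ℝ f z I) Ω :=
    (ContinuousLinearMap.apply ℝ ℂ (I:ℂ)).continuous.comp_continuousOn hc
  exact ⟨continuousOn_const.mul (h1.sub (continuousOn_const.mul hI)),
         continuousOn_const.mul (h1.add (continuousOn_const.mul hI))⟩

theorem stmt_2' (Ω : Set ℂ) (hΩo : IsOpen Ω)
    (h : ℂ → ℂ) (hh : ContDiffOn ℝ 1 h Ω)
    (hfin : IntegrableOn
      (fun z => (‖wdz h z‖) ^ 2 + (‖wdzbar h z‖) ^ 2) Ω volume)
    (hHopf : ∀ z ∈ Ω, wdz h z * (starRingEnd ℂ) (wdzbar h z) = 0)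
    (ξ : ℂ → ℂ)
    (hcd : ContDiffOn ℝ 1 ξ Ω) (hbij : Set.BijOn ξ Ω Ω)
    (hjac : ∀ z ∈ Ω, (‖wdz ξ z‖) ^ 2 - (‖wdzbar ξ z‖) ^ 2 > 0)
    (K : Set ℂ) (hKc : IsCompact K) (hKΩ : K ⊆ Ω) (hKid : ∀ z ∉ K, ξ z = z) :
    energy Ω h ≤ energy Ω (h ∘ ξ) := by
  by_cases hK : K.Nonempty
  swap
  · have hid : ξ = id := funext fun z =>
      hKid z (by simp [Set.not_nonempty_iff_eq_empty.mp hK])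
    rw [hid, Function.comp_id]
  have hΩm : MeasurableSet Ω := hΩo.measurableSet
  have hhd : ∀ w ∈ Ω, DifferentiableAt ℝ h w := fun w hw =>
    ((hh.differentiableOn one_ne_zero) w hw).differentiableAt (hΩo.mem_nhds hw)
  have hξd : ∀ z ∈ Ω, DifferentiableAt ℝ ξ z := fun z hz =>
    ((hcd.differentiableOn one_ne_zero) z hz).differentiableAt (hΩo.mem_nhds hz)
  set e : ℂ → ℝ := fun w => ‖wdz h w‖ ^ 2 + ‖wdzbar h w‖ ^ 2 with he
  set J : ℂ → ℝ := fun z => (‖wdz ξ z‖)^2 - (‖wdzbar ξ z‖)^2 with hJ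
  set g : ℂ → ℝ := fun z => e (ξ z) * J z with hg
  set r : ℂ → ℝ := fun z => e (ξ z) * (2 * (‖wdzbar ξ z‖)^2) with hr
  have he_nonneg : ∀ w, 0 ≤ e w := fun w => add_nonneg (sq_nonneg _) (sq_nonneg _)
  have hr_nonneg : ∀ z, 0 ≤ r z := fun z =>
    mul_nonneg (he_nonneg _) (by positivity)
  have hF' : ∀ z ∈ Ω, HasFDerivWithinAt ξ (fderiv ℝ ξ z) Ω z := fun z hz =>
    ((hξd z hz).hasFDerivAt).hasFDerivWithinAt
  have himg : ξ '' Ω = Ω := hbij.image_eq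
  have habs : ∀ z ∈ Ω, |(fderiv ℝ ξ z).det| • e (ξ z) = g z := by
    intro z hz
    rw [← jac_eq_det, abs_of_pos (hjac z hz), smul_eq_mul, hg, hJ]
    dsimp only
    ring
  have hcov : energy Ω h = ∫ z in Ω, g z := by
    calc energy Ω h = ∫ z in ξ '' Ω, e z := by rw [himg]; rfl
    _ = ∫ z in Ω, |(fderiv ℝ ξ z).det| • e (ξ z) :=
        integral_image_eq_integral_abs_det_fderiv_smul volume hΩm hF' hbij.injOn e
    _ = ∫ z in Ω, g z := setIntegral_congr_fun hΩm habs
  have hgint : IntegrableOn g Ω volume := by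
    have h1 : IntegrableOn (fun z => |(fderiv ℝ ξ z).det| • e (ξ z)) Ω volume :=
      (integrableOn_image_iff_integrableOn_abs_det_fderiv_smul volume hΩm hF'
        hbij.injOn e).mp (by rw [himg]; exact hfin)
    exact h1.congr_fun habs hΩm
  have hpoint : EqOn (fun z => ‖wdz (h ∘ ξ) z‖ ^ 2
      + ‖wdzbar (h ∘ ξ) z‖ ^ 2) (fun z => g z + r z) Ω := by
    intro z hz
    have hξzΩ : ξ z ∈ Ω := hbij.mapsTo hz
    obtain ⟨c1, c2⟩ := wdz_comp (hhd _ hξzΩ) (hξd z hz)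
    dsimp only
    rw [c1, c2, Complex.sq_norm, Complex.sq_norm,
      key_alg _ _ _ _ (hHopf (ξ z) hξzΩ), hg, hr, hJ, he]
    dsimp only
    rw [Complex.sq_norm, Complex.sq_norm, Complex.sq_norm, Complex.sq_norm]
    ring
  -- continuity
  have hecont : ContinuousOn e Ω := by
    obtain ⟨h1, h2⟩ := wdz_contOn hΩo hh
    exact ((continuous_norm.comp_continuousOn h1).pow 2).add
      ((continuous_norm.comp_continuousOn h2).pow 2)
  have hξcont : ContinuousOn ξ Ω := hcd.continuousOn
  have hacont : ContinuousOn (fun z => wdz ξ z) Ω := (wdz_contOn hΩo hcd).1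
  have hbcont : ContinuousOn (fun z => wdzbar ξ z) Ω := (wdz_contOn hΩo hcd).2
  have heξcont : ContinuousOn (fun z => e (ξ z)) Ω := hecont.comp hξcont hbij.mapsTo
  have hNbcont : ContinuousOn (fun z => 2 * (‖wdzbar ξ z‖)^2) Ω :=
    continuousOn_const.mul ((continuous_norm.comp_continuousOn hbcont).pow 2)
  have hrcont : ContinuousOn r Ω := heξcont.mul hNbcont
  have hJcont : ContinuousOn J Ω :=
    ((continuous_norm.comp_continuousOn hacont).pow 2).sub
      ((continuous_norm.comp_continuousOn hbcont).pow 2)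
  -- constants
  obtain ⟨z0, hz0K, hz0min⟩ := hKc.exists_isMinOn hK (hJcont.mono hKΩ)
  obtain ⟨z1, hz1K, hz1max⟩ := hKc.exists_isMaxOn hK (hNbcont.mono hKΩ)
  set m : ℝ := J z0 with hm_def
  have hm : 0 < m := hjac z0 (hKΩ hz0K)
  set C1 : ℝ := 2 * (‖wdzbar ξ z1‖)^2 with hC1_def
  have hC1 : 0 ≤ C1 := by positivity
  set C : ℝ := C1 / m with hC_def
  have hC : 0 ≤ C := div_nonneg hC1 hm.le
  have hCm : C * m = C1 := div_mul_cancel₀ _ hm.ne'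
  have hbound : ∀ z ∈ Ω, r z ≤ C * g z := by
    intro z hz
    by_cases hzK : z ∈ K
    · have h1 : 2 * (‖wdzbar ξ z‖)^2 ≤ C1 := hz1max hzK
      have h2 : m ≤ J z := hz0min hzK
      have h3 : 0 ≤ e (ξ z) := he_nonneg _
      rw [hr, hg]; dsimp only
      nlinarith [mul_le_mul_of_nonneg_left h1 h3, mul_le_mul_of_nonneg_left h2 (mul_nonneg hC h3)]
    · have hopen : IsOpen Kᶜ := hKc.isClosed.isOpen_compl
      have heq : ξ =ᶠ[nhds z] id :=
        Filter.eventuallyEq_of_mem (hopen.mem_nhds hzK) (fun w hw => hKid w hw)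
      have hfd : fderiv ℝ ξ z = fderiv ℝ (id : ℂ → ℂ) z := heq.fderiv_eq
      rw [fderiv_id] at hfd
      have hb0 : wdzbar ξ z = 0 := by
        rw [wdzbar, hfd]
        simp [Complex.I_mul_I]
      have : r z = 0 := by rw [hr]; dsimp only; rw [hb0]; simp
      rw [this]
      exact mul_nonneg hC (mul_nonneg (he_nonneg _) (hjac z hz).le)
  have hrint : IntegrableOn r Ω volume := by
    apply Integrable.mono' (hgint.const_mul C) (hrcont.aestronglyMeasurable hΩm)
    rw [ae_restrict_iff' hΩm]
    filter_upwards with z hz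
    rw [Real.norm_eq_abs, _root_.abs_of_nonneg (hr_nonneg z)]
    exact hbound z hz
  have hE2 : energy Ω (h ∘ ξ) = (∫ z in Ω, g z) + ∫ z in Ω, r z := by
    unfold energy
    rw [setIntegral_congr_fun hΩm hpoint]
    exact integral_add hgint hrint
  rw [hcov, hE2]
  have hrnn : 0 ≤ ∫ z in Ω, r z := setIntegral_nonneg hΩm (fun z _ => hr_nonneg z)
  linarith

/-- If the Hopf product of `h` vanishes identically, then no inner
variation of `h` decreases its energy. -/
theorem stmt_2 (Ω : Set ℂ) (hΩo : IsOpen Ω) (hΩb : Bornology.IsBounded Ω)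
    (h : ℂ → ℂ) (hh : ContDiffOn ℝ 1 h Ω)
    (hfin : IntegrableOn
      (fun z => (‖wdz h z‖) ^ 2 + (‖wdzbar h z‖) ^ 2) Ω volume)
    (hHopf : ∀ z ∈ Ω, wdz h z * (starRingEnd ℂ) (wdzbar h z) = 0) :
    ∀ ξ : ℂ → ℂ, IsAdmissibleChange Ω ξ → energy Ω h ≤ energy Ω (h ∘ ξ) := by
  intro ξ hξ
  obtain ⟨K, hKc, hKΩ, hKid⟩ := hξ.eq_id
  exact stmt_2' Ω hΩo h hh hfin hHopf ξ hξ.contDiffOn hξ.bijOn hξ.jac_pos K hKc hKΩ hKid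
end

section
/- Let Ω ⊂ ℂ be an open set and h : Ω → ℂ a C¹ map. Then the following are equivalent: (i) for every test function η on Ω, ∫_Ω h_z(z)·conj(h_z̄(z))·η_z̄(z) dA(z) = 0 (equivalently, the first inner variation of the Dirichlet energy of h vanishes for every test function); (ii) the Hopf product 𝓗(z) = h_z(z)·conj(h_z̄(z)) is holomorphic on Ω, i.e. h satisfies the Hopf–Laplace equation. -/
open Complex MeasureTheory Set

section AuxLemmas
open Metric Filter Function ContinuousLinearMap
open scoped Topology Convolution

lemma wdzbar_eq_zero_of_nmem_tsupport {f : ℂ → ℂ} {z : ℂ} (hz : z ∉ tsupport f) :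
    wdzbar f z = 0 := by
  have h0 : fderiv ℝ f z = 0 := by
    have hev : f =ᶠ[nhds z] 0 :=
      Filter.eventuallyEq_iff_exists_mem.2 ⟨(tsupport f)ᶜ,
        (isClosed_tsupport f).isOpen_compl.mem_nhds hz,
        fun x hx => image_eq_zero_of_notMem_tsupport hx⟩
    rw [hev.fderiv_eq]
    exact fderiv_const_apply 0
  simp [wdzbar, h0]

lemma differentiableAt_of_wdzbar_eq_zero {f : ℂ → ℂ} {z : ℂ}
    (hd : DifferentiableAt ℝ f z) (h0 : wdzbar f z = 0) : DifferentiableAt ℂ f z := by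
  set L := fderiv ℝ f z with hL
  have h1 : L 1 + Complex.I * L Complex.I = 0 := by
    have h2 : (1 / 2 : ℂ) * (L 1 + Complex.I * L Complex.I) = 0 := h0
    have := mul_eq_zero.1 h2
    simpa using this
  have hLI : L Complex.I = Complex.I * L 1 := by
    linear_combination (-Complex.I) * h1 + L Complex.I * Complex.I_sq
  set L' : ℂ →L[ℂ] ℂ := (L 1) • (ContinuousLinearMap.id ℂ ℂ) with hL'
  have hres : L'.restrictScalars ℝ = L := by
    apply ContinuousLinearMap.ext
    intro v
    have hv : v = (v.re : ℝ) • (1 : ℂ) + (v.im : ℝ) • Complex.I := by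
      simp [Complex.real_smul, Complex.re_add_im]
    have hv' : L v = (v.re : ℝ) • L 1 + (v.im : ℝ) • L Complex.I := by
      conv_lhs => rw [hv]
      rw [map_add, L.map_smul, L.map_smul]
    have : (L'.restrictScalars ℝ) v = L 1 * v := by
      simp [hL', smul_eq_mul, mul_comm]
    rw [this, hv', hLI, Complex.real_smul, Complex.real_smul]
    conv_lhs => rw [← Complex.re_add_im v]
    ring
  exact (hasFDerivAt_of_restrictScalars ℝ (f' := L') hd.hasFDerivAt hres).differentiableAt

lemma wdzbar_eq_zero_of_differentiableAt {f : ℂ → ℂ} {z : ℂ}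
    (hd : DifferentiableAt ℂ f z) : wdzbar f z = 0 := by
  have h := hd.fderiv_restrictScalars ℝ
  have h1 : fderiv ℝ f z 1 = fderiv ℂ f z 1 := by rw [h]; rfl
  have hI : fderiv ℝ f z Complex.I = Complex.I * fderiv ℂ f z 1 := by
    rw [h]
    show fderiv ℂ f z Complex.I = _
    calc fderiv ℂ f z Complex.I = fderiv ℂ f z (Complex.I • 1) := by norm_num
    _ = Complex.I * fderiv ℂ f z 1 := by rw [(fderiv ℂ f z).map_smul, smul_eq_mul]
  rw [wdzbar, h1, hI]
  linear_combination (fderiv ℂ f z 1) * Complex.I_sq / 2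

lemma wdzbar_mul {f g : ℂ → ℂ} {z : ℂ} (hf : DifferentiableAt ℝ f z)
    (hg : DifferentiableAt ℝ g z) :
    wdzbar (fun w => f w * g w) z = wdzbar f z * g z + f z * wdzbar g z := by
  have h := fderiv_fun_mul hf hg
  rw [wdzbar, h]
  simp only [ContinuousLinearMap.add_apply, ContinuousLinearMap.smul_apply, smul_eq_mul]
  rw [wdzbar, wdzbar]
  ring


lemma hasCompactSupport_fderiv_apply {f : ℂ → ℂ} (hs : HasCompactSupport f) (v : ℂ) :
    HasCompactSupport fun z => fderiv ℝ f z v := by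
  refine (hs.fderiv ℝ).mono' ?_
  intro z hz
  have h1 : fderiv ℝ f z ≠ 0 := fun h0 => hz (by simp [Function.mem_support, h0])
  exact subset_tsupport _ h1

lemma integral_fderiv_dir_eq_zero {f : ℂ → ℂ} (hd : Differentiable ℝ f)
    (hc : Continuous (fderiv ℝ f)) (hs : HasCompactSupport f) {v : ℂ}
    (hv : v = 1 ∨ v = Complex.I) :
    ∫ z, fderiv ℝ f z v = 0 := by
  obtain ⟨R, hR⟩ := hs.isBounded.subset_closedBall (0 : ℂ)
  have hfc : Continuous f := hd.continuous
  have happ : Continuous fun z => fderiv ℝ f z v := hc.clm_apply continuous_const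
  have hcoord : Continuous fun p : ℝ × ℝ => (p.1 : ℂ) + p.2 * Complex.I := by fun_prop
  set g : ℝ × ℝ → ℂ := fun p => fderiv ℝ f ((p.1 : ℂ) + p.2 * Complex.I) v with hg
  have hmemts : ∀ w : ℂ, fderiv ℝ f w v ≠ 0 → w ∈ tsupport f := by
    intro w hw
    refine support_fderiv_subset ℝ ?_
    exact fun h0 => hw (by simp [h0])
  have hmem : ∀ (x y : ℝ), ((x : ℂ) + y * Complex.I) ∈ tsupport f → |x| ≤ R ∧ |y| ≤ R := by
    intro x y hmemf
    have habs : ‖(x : ℂ) + y * Complex.I‖ ≤ R := by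
      simpa [Complex.dist_eq] using hR hmemf
    constructor
    · have h1 : |((x : ℂ) + y * Complex.I).re| ≤ ‖(x : ℂ) + y * Complex.I‖ :=
        Complex.abs_re_le_norm _
      simpa using h1.trans habs
    · have h1 : |((x : ℂ) + y * Complex.I).im| ≤ ‖(x : ℂ) + y * Complex.I‖ :=
        Complex.abs_im_le_norm _
      simpa using h1.trans habs
  have hg_cont : Continuous g := happ.comp hcoord
  have hg_supp : HasCompactSupport g := by
    refine HasCompactSupport.intro (K := closedBall (0:ℝ) R ×ˢ closedBall (0:ℝ) R)
      ((isCompact_closedBall _ _).prod (isCompact_closedBall _ _)) ?_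
    rintro ⟨x, y⟩ hp
    by_contra hne
    have := hmem x y (hmemts _ hne)
    exact hp (by simpa [Prod.ext_iff, Real.dist_eq] using this)
  have hg_int : Integrable g := hg_cont.integrable_of_hasCompactSupport hg_supp
  have step1 : ∫ z, fderiv ℝ f z v = ∫ p : ℝ × ℝ, g p := by
    rw [← MeasurePreserving.integral_comp Complex.volume_preserving_equiv_real_prod
      Complex.measurableEquivRealProd.measurableEmbedding g]
    congr 1
    funext z
    simp only [hg, Complex.measurableEquivRealProd]
    norm_num [Complex.re_add_im]
  -- slice compact support / integrability facts
  have hslice_u_int : ∀ b : ℝ, (Integrable fun t : ℝ => f ((t : ℂ) + b * Complex.I))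
      ∧ (Integrable fun t : ℝ => f ((b : ℂ) + t * Complex.I)) := by
    intro b
    constructor
    · refine (hfc.comp (by fun_prop)).integrable_of_hasCompactSupport ?_
      refine HasCompactSupport.intro (isCompact_Icc (a := -R) (b := R)) ?_
      intro t ht
      show f ((t : ℂ) + b * Complex.I) = 0
      refine image_eq_zero_of_notMem_tsupport fun hmemf => ht ?_
      have := (hmem t b hmemf).1
      exact ⟨neg_le_of_abs_le this, le_of_abs_le this⟩
    · refine (hfc.comp (by fun_prop)).integrable_of_hasCompactSupport ?_
      refine HasCompactSupport.intro (isCompact_Icc (a := -R) (b := R)) ?_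
      intro t ht
      show f ((b : ℂ) + t * Complex.I) = 0
      refine image_eq_zero_of_notMem_tsupport fun hmemf => ht ?_
      have := (hmem b t hmemf).2
      exact ⟨neg_le_of_abs_le this, le_of_abs_le this⟩
  have hslice_g_int : ∀ b : ℝ, (Integrable fun t : ℝ => g (t, b))
      ∧ (Integrable fun t : ℝ => g (b, t)) := by
    intro b
    constructor
    · refine (hg_cont.comp (by fun_prop)).integrable_of_hasCompactSupport ?_
      refine HasCompactSupport.intro (isCompact_Icc (a := -R) (b := R)) ?_
      intro t ht
      by_contra hne
      have := (hmem t b (hmemts _ hne)).1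
      exact ht ⟨neg_le_of_abs_le this, le_of_abs_le this⟩
    · refine (hg_cont.comp (by fun_prop)).integrable_of_hasCompactSupport ?_
      refine HasCompactSupport.intro (isCompact_Icc (a := -R) (b := R)) ?_
      intro t ht
      by_contra hne
      have := (hmem b t (hmemts _ hne)).2
      exact ht ⟨neg_le_of_abs_le this, le_of_abs_le this⟩
  rw [step1]
  have hg_int' : Integrable g (volume.prod volume) := by
    rwa [← MeasureTheory.Measure.volume_eq_prod]
  have hprod : ∫ p : ℝ × ℝ, g p = ∫ x : ℝ, ∫ y : ℝ, g (x, y) := by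
    rw [MeasureTheory.Measure.volume_eq_prod, MeasureTheory.integral_prod g hg_int']
  rcases hv with rfl | rfl
  · -- direction 1 : differentiate in x, need swapped order
    have hswap : ∫ x : ℝ, ∫ y : ℝ, g (x, y) = ∫ y : ℝ, ∫ x : ℝ, g (x, y) := by
      exact MeasureTheory.integral_integral_swap (by exact hg_int')
    rw [hprod, hswap]
    have hinner : ∀ y : ℝ, ∫ x : ℝ, g (x, y) = 0 := by
      intro y
      have hder : ∀ x : ℝ, HasDerivAt (fun t : ℝ => f ((t : ℂ) + y * Complex.I)) (g (x, y)) x := by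
        intro x
        have hcurve : HasDerivAt (fun t : ℝ => (t : ℂ) + (y : ℂ) * Complex.I) 1 x := by
          have h0 : HasDerivAt (fun t : ℝ => t • (1 : ℂ) + (y : ℂ) * Complex.I)
              ((1 : ℝ) • (1 : ℂ)) x := ((hasDerivAt_id x).smul_const (1 : ℂ)).add_const _
          simpa [Complex.real_smul] using h0
        have := (hd _).hasFDerivAt.comp_hasDerivAt x hcurve
        exact this
      exact MeasureTheory.integral_eq_zero_of_hasDerivAt_of_integrable hder
        (hslice_g_int y).1 (hslice_u_int y).1
    simp [hinner]
  · -- direction I : differentiate in y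
    rw [hprod]
    have hinner : ∀ x : ℝ, ∫ y : ℝ, g (x, y) = 0 := by
      intro x
      have hder : ∀ y : ℝ, HasDerivAt (fun t : ℝ => f ((x : ℂ) + t * Complex.I)) (g (x, y)) y := by
        intro y
        have hcurve : HasDerivAt (fun t : ℝ => (x : ℂ) + (t : ℂ) * Complex.I) Complex.I y := by
          have h0 : HasDerivAt (fun t : ℝ => (x : ℂ) + t • Complex.I)
              ((1 : ℝ) • Complex.I) y := ((hasDerivAt_id y).smul_const Complex.I).const_add _
          simpa [Complex.real_smul] using h0
        have := (hd _).hasFDerivAt.comp_hasDerivAt y hcurve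
        exact this
      exact MeasureTheory.integral_eq_zero_of_hasDerivAt_of_integrable hder
        (hslice_g_int x).2 (hslice_u_int x).2
    simp [hinner]

lemma integral_wdzbar_eq_zero {f : ℂ → ℂ} (hd : Differentiable ℝ f)
    (hc : Continuous (fderiv ℝ f)) (hs : HasCompactSupport f) :
    ∫ z, wdzbar f z = 0 := by
  have h1 : Integrable fun z => fderiv ℝ f z 1 :=
    (hc.clm_apply continuous_const).integrable_of_hasCompactSupport
      (hasCompactSupport_fderiv_apply hs 1)
  have hI : Integrable fun z => fderiv ℝ f z Complex.I :=
    (hc.clm_apply continuous_const).integrable_of_hasCompactSupport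
      (hasCompactSupport_fderiv_apply hs Complex.I)
  have : ∫ z, wdzbar f z = (1/2 : ℂ) * ((∫ z, fderiv ℝ f z 1)
      + Complex.I * ∫ z, fderiv ℝ f z Complex.I) := by
    rw [← integral_const_mul, ← integral_add h1 (hI.const_mul _),
      ← integral_const_mul]
    rfl
  rw [this, integral_fderiv_dir_eq_zero hd hc hs (Or.inl rfl),
    integral_fderiv_dir_eq_zero hd hc hs (Or.inr rfl)]
  simp


lemma integral_hopf_eq_zero_of_holomorphic (Ω : Set ℂ) (hΩo : IsOpen Ω) (H : ℂ → ℂ)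
    (HC : DifferentiableOn ℂ H Ω) (η : ℂ → ℂ) (hη1 : ContDiff ℝ (⊤ : ℕ∞) η)
    (hη2 : IsCompact (tsupport η)) (hη3 : tsupport η ⊆ Ω) :
    ∫ z in Ω, H z * wdzbar η z = 0 := by
  set f := fun z => H z * η z with hf
  have hηd : Differentiable ℝ η := hη1.differentiable (by norm_num)
  have hcover : ∀ z : ℂ, z ∈ Ω ∨ z ∉ tsupport η := by
    intro z
    by_cases hz : z ∈ Ω
    · exact Or.inl hz
    · exact Or.inr fun hmem => hz (hη3 hmem)
  have hfz : ∀ z ∉ tsupport η, f z = 0 := by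
    intro z hz
    simp [hf, image_eq_zero_of_notMem_tsupport hz]
  have hopen : IsOpen (tsupport η)ᶜ := (isClosed_tsupport η).isOpen_compl
  have hf0 : ∀ z ∉ tsupport η, f =ᶠ[nhds z] 0 := by
    intro z hz
    exact Filter.eventuallyEq_iff_exists_mem.2 ⟨(tsupport η)ᶜ, hopen.mem_nhds hz, hfz⟩
  have HDat : ∀ z ∈ Ω, DifferentiableAt ℂ H z :=
    fun z hz => HC.differentiableAt (hΩo.mem_nhds hz)
  have hfd : Differentiable ℝ f := by
    intro z
    rcases hcover z with hz | hz
    · exact ((HDat z hz).restrictScalars ℝ).mul (hηd z)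
    · exact ((hf0 z hz).differentiableAt_iff).2 (differentiableAt_const 0)
  have hfC1 : ContDiffOn ℝ 1 f Ω := by
    have hH1 : ContDiffOn ℂ 1 H Ω := HC.contDiffOn hΩo
    exact (hH1.restrict_scalars ℝ).mul ((hη1.of_le (by norm_num)).contDiffOn)
  have hfderiv_cont : Continuous (fderiv ℝ f) := by
    rw [continuous_iff_continuousAt]
    intro z
    rcases hcover z with hz | hz
    · exact (hfC1.continuousOn_fderiv_of_isOpen hΩo le_rfl).continuousAt (hΩo.mem_nhds hz)
    · have hev : fderiv ℝ f =ᶠ[nhds z] fun _ => 0 := by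
        refine Filter.eventually_of_mem (hopen.mem_nhds hz) fun w hw => ?_
        rw [(hf0 w hw).fderiv_eq]
        exact fderiv_const_apply 0
      exact hev.continuousAt
  have hfs : HasCompactSupport f := HasCompactSupport.intro hη2 hfz
  have key : ∫ z, wdzbar f z = 0 := integral_wdzbar_eq_zero hfd hfderiv_cont hfs
  have ha : ∀ z ∈ Ω, H z * wdzbar η z = wdzbar f z := by
    intro z hz
    rw [hf, wdzbar_mul ((HDat z hz).restrictScalars ℝ) (hηd z),
      wdzbar_eq_zero_of_differentiableAt (HDat z hz)]
    ring
  have hb : ∀ z ∉ Ω, wdzbar f z = 0 := by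
    intro z hz
    refine wdzbar_eq_zero_of_nmem_tsupport fun hmem => hz ?_
    have hsub : tsupport f ⊆ tsupport η := by
      apply closure_mono
      intro w hw
      simp only [Function.mem_support] at hw ⊢
      intro h0
      exact hw (by simp [hf, h0])
    exact hη3 (hsub hmem)
  calc ∫ z in Ω, H z * wdzbar η z = ∫ z in Ω, wdzbar f z :=
        setIntegral_congr_fun hΩo.measurableSet ha
  _ = ∫ z, wdzbar f z := setIntegral_eq_integral_of_forall_compl_eq_zero hb
  _ = 0 := key


lemma differentiableOn_of_integral_wdzbar_eq_zero (Ω : Set ℂ) (hΩo : IsOpen Ω) (H : ℂ → ℂ)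
    (Hcont : ContinuousOn H Ω)
    (hA : ∀ η : ℂ → ℂ, ContDiff ℝ (⊤ : ℕ∞) η → IsCompact (tsupport η) → tsupport η ⊆ Ω →
      ∫ z in Ω, H z * wdzbar η z = 0) :
    DifferentiableOn ℂ H Ω := by
  intro z₀ hz₀
  suffices hgoal : DifferentiableAt ℂ H z₀ by exact hgoal.differentiableWithinAt
  obtain ⟨ε, hε, hballΩ⟩ := Metric.isOpen_iff.1 hΩo z₀ hz₀
  set r : ℝ := ε / 3 with hrdef
  have hr0 : 0 < r := by positivity
  have h2r : closedBall z₀ (2 * r) ⊆ Ω := by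
    intro w hw
    apply hballΩ
    have h1 : dist w z₀ ≤ 2 * r := hw
    have h2 : 2 * r < ε := by rw [hrdef]; linarith
    exact lt_of_le_of_lt h1 h2
  -- cutoff
  set χ : ContDiffBump z₀ := ⟨3 * r / 2, 2 * r, by positivity, by linarith⟩ with hχdef
  set G : ℂ → ℂ := fun w => χ w • H w with hGdef
  have hχ0 : ∀ w ∉ closedBall z₀ (2 * r), χ w = 0 := by
    intro w hw
    have h1 : w ∉ Function.support χ := by
      rw [χ.support_eq]
      exact fun hmem => hw (ball_subset_closedBall hmem)
    simpa [Function.mem_support, not_not] using h1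
  have hGH : ∀ w ∈ closedBall z₀ (3 * r / 2), G w = H w := by
    intro w hw
    have h1 : χ w = 1 := χ.one_of_mem_closedBall hw
    simp [hGdef, h1]
  have hGcont : Continuous G := by
    rw [continuous_iff_continuousAt]
    intro z
    by_cases hz : z ∈ Ω
    · exact (χ.continuous.continuousAt).smul (Hcont.continuousAt (hΩo.mem_nhds hz))
    · have hzc : z ∈ (closedBall z₀ (2 * r))ᶜ := fun hmem => hz (h2r hmem)
      have hev : G =ᶠ[nhds z] fun _ => 0 := by
        refine Filter.eventually_of_mem
          ((Metric.isClosed_closedBall.isOpen_compl).mem_nhds hzc) fun w hw => ?_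
        simp [hGdef, hχ0 w hw]
      exact hev.continuousAt
  have hGsupp : HasCompactSupport G := by
    refine HasCompactSupport.intro (isCompact_closedBall z₀ (2 * r)) fun w hw => ?_
    simp [hGdef, hχ0 w hw]
  have hGloc : LocallyIntegrable G := hGcont.locallyIntegrable
  -- bump family
  set φ : ℕ → ContDiffBump (0 : ℂ) :=
    fun n => ⟨r / (n + 2) / 2, r / (n + 2), by positivity, by
      have h1 : (0:ℝ) < r / (n + 2) := by positivity
      linarith⟩ with hφdef
  have hφOut : ∀ n : ℕ, (φ n).rOut = r / (n + 2) := fun n => rfl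
  have hφOut_le : ∀ n : ℕ, (φ n).rOut ≤ r / 2 := by
    intro n
    rw [hφOut, div_le_div_iff₀ (by positivity) (by norm_num)]
    have hn : (0:ℝ) ≤ (n:ℝ) := Nat.cast_nonneg n
    nlinarith
  have hφOut_tendsto : Tendsto (fun n : ℕ => (φ n).rOut) atTop (𝓝 0) := by
    simp only [hφOut]
    exact Tendsto.div_atTop tendsto_const_nhds
      (tendsto_atTop_add_const_right _ 2 tendsto_natCast_atTop_atTop)
  set L : ℂ →L[ℝ] ℝ →L[ℝ] ℂ := (ContinuousLinearMap.lsmul ℝ ℝ).flip with hLdef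
  set F : ℕ → ℂ → ℂ := fun n => G ⋆[L, volume] (φ n).normed volume with hFdef
  have hφC1 : ∀ n, ContDiff ℝ 1 ((φ n).normed volume) := fun n => (φ n).contDiff_normed
  have hφsupp : ∀ n, HasCompactSupport ((φ n).normed volume) :=
    fun n => (φ n).hasCompactSupport_normed
  have hder : ∀ (n : ℕ) (x : ℂ), HasFDerivAt (F n)
      ((G ⋆[L.precompR ℂ, volume] fderiv ℝ ((φ n).normed volume)) x) x := fun n x =>
    (hφsupp n).hasFDerivAt_convolution_right L hGloc (hφC1 n) x
  have happly : ∀ (n : ℕ) (x v : ℂ),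
      (G ⋆[L.precompR ℂ, volume] fderiv ℝ ((φ n).normed volume)) x v
      = ∫ t, (fderiv ℝ ((φ n).normed volume) (x - t) v) • G t := by
    intro n x v
    rw [convolution_precompR_apply L hGloc ((hφsupp n).fderiv ℝ)
      ((hφC1 n).continuous_fderiv one_ne_zero)]
    rw [convolution_def]
    simp only [hLdef, ContinuousLinearMap.flip_apply, ContinuousLinearMap.lsmul_apply]
  -- key : wdzbar (F n) vanishes on ball z₀ r
  have hwd_zero : ∀ (n : ℕ), ∀ x ∈ ball z₀ r, wdzbar (F n) x = 0 := by
    intro n x hx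
    set ψ : ℂ → ℝ := (φ n).normed volume with hψdef
    set η : ℂ → ℂ := fun s => (ψ (x - s) : ℂ) with hηdef
    have hψd : Differentiable ℝ ψ := (hφC1 n).differentiable one_ne_zero
    have hηfder : ∀ s : ℂ, HasFDerivAt η
        (Complex.ofRealCLM.comp ((fderiv ℝ ψ (x - s)).comp
          (-(ContinuousLinearMap.id ℝ ℂ)))) s := by
      intro s
      have hin : HasFDerivAt (fun s : ℂ => x - s) (-(ContinuousLinearMap.id ℝ ℂ)) s :=
        (hasFDerivAt_id s).const_sub x
      have hout : HasFDerivAt ψ (fderiv ℝ ψ (x - s)) (x - s) := (hψd (x - s)).hasFDerivAt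
      exact Complex.ofRealCLM.hasFDerivAt.comp s (hout.comp s hin)
    have hwdη : ∀ s : ℂ, wdzbar η s
        = -((1/2 : ℂ) * ((fderiv ℝ ψ (x - s) 1 : ℝ)
            + Complex.I * (fderiv ℝ ψ (x - s) Complex.I : ℝ))) := by
      intro s
      rw [wdzbar, (hηfder s).fderiv]
      simp only [ContinuousLinearMap.comp_apply, ContinuousLinearMap.neg_apply,
        ContinuousLinearMap.coe_id', id_eq, Complex.ofRealCLM_apply, map_neg]
      push_cast
      ring
    have hsupp_η : tsupport η ⊆ closedBall x (φ n).rOut := by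
      refine closure_minimal ?_ Metric.isClosed_closedBall
      intro s hs
      have hψne : x - s ∈ Function.support ψ := by
        simp only [hηdef, Function.mem_support] at hs
        intro h0
        exact hs (by simp [h0])
      rw [hψdef, (φ n).support_normed_eq] at hψne
      have hn1 : ‖x - s‖ < (φ n).rOut := by
        simpa [mem_ball, dist_zero_right] using hψne
      have hds : dist s x < (φ n).rOut := by
        rw [dist_comm, dist_eq_norm]; exact hn1
      exact ball_subset_closedBall (mem_ball.2 hds)
    have hsupp_Ω3 : closedBall x (φ n).rOut ⊆ closedBall z₀ (3 * r / 2) := by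
      intro t ht
      have h1 : dist t x ≤ (φ n).rOut := ht
      have h2 : dist x z₀ < r := hx
      have h3 := hφOut_le n
      have h4 : dist t z₀ ≤ dist t x + dist x z₀ := dist_triangle _ _ _
      have h5 : dist t z₀ ≤ 3 * r / 2 := by linarith
      exact h5
    have hηtest1 : ContDiff ℝ (⊤ : ℕ∞) η :=
      Complex.ofRealCLM.contDiff.comp
        (((φ n).contDiff_normed).comp (contDiff_const.sub contDiff_id))
    have hηtest2 : IsCompact (tsupport η) :=
      (isCompact_closedBall _ _).of_isClosed_subset (isClosed_tsupport η) hsupp_η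
    have hηtest3 : tsupport η ⊆ Ω := fun t ht =>
      h2r (closedBall_subset_closedBall (by linarith) (hsupp_Ω3 (hsupp_η ht)))
    have hAη := hA η hηtest1 hηtest2 hηtest3
    have hpt : (fun t => wdzbar η t * G t) = Ω.indicator (fun t => H t * wdzbar η t) := by
      funext t
      by_cases ht : t ∈ tsupport η
      · have htΩ3 : t ∈ closedBall z₀ (3 * r / 2) := hsupp_Ω3 (hsupp_η ht)
        have htΩ : t ∈ Ω := h2r (closedBall_subset_closedBall (by linarith) htΩ3)
        rw [indicator_of_mem htΩ, hGH t htΩ3]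
        ring
      · have h0 : wdzbar η t = 0 := wdzbar_eq_zero_of_nmem_tsupport ht
        rw [h0]
        by_cases htΩ : t ∈ Ω
        · rw [indicator_of_mem htΩ, h0]; ring
        · rw [indicator_of_notMem htΩ]; ring
    have hIη : ∫ t, wdzbar η t * G t = 0 := by
      rw [hpt, MeasureTheory.integral_indicator hΩo.measurableSet]
      exact hAη
    have hintv : ∀ v : ℂ, Integrable fun t => (fderiv ℝ ψ (x - t) v) • G t := by
      intro v
      refine Continuous.integrable_of_hasCompactSupport ?_ ?_
      · exact ((((hφC1 n).continuous_fderiv one_ne_zero).comp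
          (continuous_const.sub continuous_id)).clm_apply continuous_const).smul hGcont
      · refine hGsupp.mono' fun t ht => subset_tsupport G ?_
        intro h0
        exact ht (by simp [h0])
    have hcomp : wdzbar (F n) x = ∫ t, -(wdzbar η t * G t) := by
      rw [wdzbar, (hder n x).fderiv, happly n x 1, happly n x Complex.I]
      rw [← integral_const_mul Complex.I,
        ← integral_add (hintv 1) ((hintv Complex.I).const_mul _), ← integral_const_mul]
      congr 1
      funext t
      rw [hwdη t]
      simp only [Complex.real_smul]
      ring
    rw [hcomp, integral_neg, hIη, neg_zero]
  have hFdiff : ∀ n : ℕ, DifferentiableOn ℂ (F n) (ball z₀ r) := by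
    intro n t ht
    exact (differentiableAt_of_wdzbar_eq_zero
      ((hder n t).differentiableAt) (hwd_zero n t ht)).differentiableWithinAt
  -- uniform convergence
  have hGtc : Tendsto G (Filter.cocompact ℂ) (𝓝 0) := by
    have hev : ∀ᶠ w in Filter.cocompact ℂ, G w = 0 := by
      rw [Filter.eventually_iff, Filter.mem_cocompact]
      exact ⟨closedBall z₀ (2*r), isCompact_closedBall _ _,
        fun w hw => by simp [hGdef, hχ0 w hw]⟩
    exact Filter.Tendsto.congr' (by filter_upwards [hev] with w h using h.symm)
      tendsto_const_nhds
  have hGu : UniformContinuous G := hGcont.uniformContinuous_of_tendsto_cocompact hGtc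
  have htu : TendstoUniformly F G atTop := by
    rw [Metric.tendstoUniformly_iff]
    intro ε' hε'
    obtain ⟨δ, hδ0, hδ⟩ := Metric.uniformContinuous_iff.1 hGu (ε' / 2) (by linarith)
    filter_upwards [hφOut_tendsto.eventually_lt_const hδ0] with n hn
    intro x
    have hb : dist (F n x) (G x) ≤ ε' / 2 := by
      have hF : F n = (φ n).normed volume ⋆[ContinuousLinearMap.lsmul ℝ ℝ, volume] G :=
        convolution_flip (ContinuousLinearMap.lsmul ℝ ℝ)
      rw [hF]
      exact ContDiffBump.dist_normed_convolution_le hGcont.aestronglyMeasurable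
        (fun y hy => (hδ (lt_trans (mem_ball.1 hy) hn)).le)
    calc dist (G x) (F n x) = dist (F n x) (G x) := dist_comm _ _
    _ ≤ ε' / 2 := hb
    _ < ε' := by linarith
  have hloc : TendstoLocallyUniformlyOn F G atTop (ball z₀ r) :=
    htu.tendstoLocallyUniformly.tendstoLocallyUniformlyOn
  have hGdiff : DifferentiableOn ℂ G (ball z₀ r) :=
    hloc.differentiableOn (Filter.Eventually.of_forall hFdiff) isOpen_ball
  have hGz₀ : DifferentiableAt ℂ G z₀ :=
    hGdiff.differentiableAt (isOpen_ball.mem_nhds (mem_ball_self hr0))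
  have heq : G =ᶠ[nhds z₀] H := by
    refine Filter.eventually_of_mem (isOpen_ball.mem_nhds (mem_ball_self hr0)) fun w hw => ?_
    refine hGH w ?_
    have h1 : dist w z₀ < r := hw
    exact mem_closedBall.2 (by linarith)
  exact heq.differentiableAt_iff.1 hGz₀


end AuxLemmas

/-- The first inner variation vanishes for every test function if and
only if the Hopf product is holomorphic (the Hopf–Laplace equation). -/
theorem stmt_6 (Ω : Set ℂ) (hΩo : IsOpen Ω)
    (h : ℂ → ℂ) (hh : ContDiffOn ℝ 1 h Ω) :
    (∀ η : ℂ → ℂ, IsTestFunction Ω η →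
        ∫ z in Ω, wdz h z * (starRingEnd ℂ) (wdzbar h z) * wdzbar η z = 0) ↔
      DifferentiableOn ℂ (fun z => wdz h z * (starRingEnd ℂ) (wdzbar h z)) Ω := by
  have hfd : ContinuousOn (fderiv ℝ h) Ω := hh.continuousOn_fderiv_of_isOpen hΩo le_rfl
  have h1 : ContinuousOn (fun z => fderiv ℝ h z 1) Ω := hfd.clm_apply continuousOn_const
  have hI : ContinuousOn (fun z => fderiv ℝ h z Complex.I) Ω := hfd.clm_apply continuousOn_const
  have hwdzc : ContinuousOn (wdz h) Ω :=
    continuousOn_const.mul (h1.sub (continuousOn_const.mul hI))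
  have hwdzbarc : ContinuousOn (wdzbar h) Ω :=
    continuousOn_const.mul (h1.add (continuousOn_const.mul hI))
  have Hcont : ContinuousOn (fun z => wdz h z * (starRingEnd ℂ) (wdzbar h z)) Ω :=
    hwdzc.mul (ContinuousOn.star hwdzbarc)
  constructor
  · intro hA
    apply differentiableOn_of_integral_wdzbar_eq_zero Ω hΩo _ Hcont
    intro η hη1 hη2 hη3
    exact hA η ⟨hη1, hη2, hη3⟩
  · intro HC η hη
    exact integral_hopf_eq_zero_of_holomorphic Ω hΩo _ HC η hη.1 hη.2.1 hη.2.2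
end

section
/- Let Ω ⊂ ℂ be a bounded domain (open and connected) and let h : Ω → ℂ be C¹ with finite Dirichlet energy, with vanishing Hopf product h_z(z)·conj(h_z̄(z)) = 0 for every z ∈ Ω, and with Dh(z) ≠ 0 for almost every z ∈ Ω. Then every nontrivial inner variation strictly increases the energy: for every admissible change of variables ξ of Ω with ξ not equal to the identity map, E[h] < E[h ∘ ξ]. -/
open Complex MeasureTheory Set

/-! ### Auxiliary lemmas -/

noncomputable def wA (L : ℂ →L[ℝ] ℂ) : ℂ := (1/2 : ℂ) * (L 1 - Complex.I * L Complex.I)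
noncomputable def wB (L : ℂ →L[ℝ] ℂ) : ℂ := (1/2 : ℂ) * (L 1 + Complex.I * L Complex.I)

lemma wdz_eq_wA (f : ℂ → ℂ) (z : ℂ) : wdz f z = wA (fderiv ℝ f z) := rfl
lemma wdzbar_eq_wB (f : ℂ → ℂ) (z : ℂ) : wdzbar f z = wB (fderiv ℝ f z) := rfl

private lemma aux_alg (a b x y v : ℂ) (hv : v = x + y*Complex.I) :
    x*a + y*b = (1/2:ℂ)*(a - Complex.I*b)*v + (1/2:ℂ)*(a+Complex.I*b)*(x - y*Complex.I) := by
  subst hv; linear_combination (y*b) * Complex.I_sq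

lemma wA_wB_apply (L : ℂ →L[ℝ] ℂ) (v : ℂ) :
    L v = wA L * v + wB L * (starRingEnd ℂ) v := by
  have hv : v = (v.re : ℝ) • (1:ℂ) + (v.im : ℝ) • (Complex.I) := by
    simp [Complex.real_smul, Complex.re_add_im]
  have h1 : L v = (v.re : ℂ) * L 1 + (v.im : ℂ) * L Complex.I := by
    conv_lhs => rw [hv]
    rw [map_add, L.map_smul, L.map_smul]
    simp [Complex.real_smul]
  have hc : (starRingEnd ℂ) v = (v.re : ℂ) - (v.im : ℂ) * Complex.I := by
    apply Complex.ext <;> simp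
  rw [h1, hc, wA, wB]
  exact aux_alg (L 1) (L Complex.I) _ _ v (Complex.re_add_im v).symm

lemma eq_zero_of_wA_wB (L : ℂ →L[ℝ] ℂ) (hA : wA L = 0) (hB : wB L = 0) : L = 0 := by
  ext v
  rw [ContinuousLinearMap.zero_apply, wA_wB_apply L v, hA, hB, zero_mul, zero_mul, add_zero]

lemma det_eq_wA_wB (L : ℂ →L[ℝ] ℂ) :
    L.det = ‖wA L‖ ^ 2 - ‖wB L‖ ^ 2 := by
  have : L.det = LinearMap.det (L : ℂ →ₗ[ℝ] ℂ) := rfl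
  rw [this, ← LinearMap.det_toMatrix Complex.basisOneI, Matrix.det_fin_two]
  simp only [LinearMap.toMatrix_apply, Complex.coe_basisOneI_repr, Complex.basisOneI,
    Module.Basis.coe_ofEquivFun]
  rw [wA, wB, Complex.sq_norm, Complex.sq_norm]
  simp [Complex.normSq_apply, Complex.mul_re, Complex.mul_im]
  ring

lemma wA_comp (L M : ℂ →L[ℝ] ℂ) :
    wA (L.comp M) = wA L * wA M + wB L * (starRingEnd ℂ) (wB M) := by
  have m1 : M 1 = wA M + wB M := by simpa using wA_wB_apply M 1
  have mI : M Complex.I = wA M * Complex.I - wB M * Complex.I := by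
    have := wA_wB_apply M Complex.I
    rw [Complex.conj_I] at this; linear_combination this
  rw [wA, ContinuousLinearMap.comp_apply, ContinuousLinearMap.comp_apply,
    wA_wB_apply L (M 1), wA_wB_apply L (M Complex.I), m1, mI]
  simp only [map_add, map_sub, map_mul, Complex.conj_I, Complex.conj_conj]
  set a := wA L; set b := wB L; set p := wA M; set q := wB M
  set p' := (starRingEnd ℂ) p; set q' := (starRingEnd ℂ) q
  linear_combination ((-(1/2:ℂ))*(a*p - a*q - b*p' + b*q')) * Complex.I_sq

lemma wB_comp (L M : ℂ →L[ℝ] ℂ) :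
    wB (L.comp M) = wA L * wB M + wB L * (starRingEnd ℂ) (wA M) := by
  have m1 : M 1 = wA M + wB M := by simpa using wA_wB_apply M 1
  have mI : M Complex.I = wA M * Complex.I - wB M * Complex.I := by
    have := wA_wB_apply M Complex.I
    rw [Complex.conj_I] at this; linear_combination this
  rw [wB, ContinuousLinearMap.comp_apply, ContinuousLinearMap.comp_apply,
    wA_wB_apply L (M 1), wA_wB_apply L (M Complex.I), m1, mI]
  simp only [map_add, map_sub, map_mul, Complex.conj_I, Complex.conj_conj]
  set a := wA L; set b := wB L; set p := wA M; set q := wB M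
  set p' := (starRingEnd ℂ) p; set q' := (starRingEnd ℂ) q
  linear_combination (((1/2:ℂ))*(a*p - a*q - b*p' + b*q')) * Complex.I_sq

/-- Energy density identity under vanishing Hopf product. -/
lemma density_identity (a b p q : ℂ) (hab : a * (starRingEnd ℂ) b = 0) :
    ‖a*p + b*(starRingEnd ℂ) q‖ ^ 2 + ‖a*q + b*(starRingEnd ℂ) p‖ ^ 2
      = (‖a‖ ^ 2 + ‖b‖ ^ 2) * (‖p‖ ^ 2 + ‖q‖ ^ 2) := by
  have hab' : (starRingEnd ℂ) a * b = 0 := by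
    have := congrArg (starRingEnd ℂ) hab
    simpa [map_mul] using this
  have key : ((Complex.normSq (a*p + b*(starRingEnd ℂ) q) : ℂ)
      + (Complex.normSq (a*q + b*(starRingEnd ℂ) p) : ℂ))
      = ((Complex.normSq a : ℂ) + Complex.normSq b) * ((Complex.normSq p : ℂ) + Complex.normSq q) := by
    rw [← Complex.mul_conj, ← Complex.mul_conj, ← Complex.mul_conj, ← Complex.mul_conj,
      ← Complex.mul_conj, ← Complex.mul_conj]
    simp only [map_add, map_mul, Complex.conj_conj]
    linear_combination (2*p*q) * hab + (2*((starRingEnd ℂ) p)*((starRingEnd ℂ) q)) * hab'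
  have keyR : Complex.normSq (a*p + b*(starRingEnd ℂ) q) + Complex.normSq (a*q + b*(starRingEnd ℂ) p)
      = (Complex.normSq a + Complex.normSq b) * (Complex.normSq p + Complex.normSq q) := by
    exact_mod_cast key
  simpa [Complex.sq_norm] using keyR

/-- If the Hopf product of `h` vanishes identically on a bounded domain
and `Dh ≠ 0` a.e., then every nontrivial inner variation strictly increases the energy. -/
theorem stmt_17 (Ω : Set ℂ) (hΩo : IsOpen Ω) (hΩc : IsConnected Ω)
    (hΩb : Bornology.IsBounded Ω)
    (h : ℂ → ℂ) (hh : ContDiffOn ℝ 1 h Ω)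
    (hfin : IntegrableOn
      (fun z => (‖wdz h z‖) ^ 2 + (‖wdzbar h z‖) ^ 2) Ω volume)
    (hHopf : ∀ z ∈ Ω, wdz h z * (starRingEnd ℂ) (wdzbar h z) = 0)
    (hD : ∀ᵐ z ∂(volume.restrict Ω), fderiv ℝ h z ≠ 0) :
    ∀ ξ : ℂ → ℂ, IsAdmissibleChange Ω ξ → (∃ z ∈ Ω, ξ z ≠ z) →
      energy Ω h < energy Ω (h ∘ ξ) := by
  rintro ξ hξ ⟨z₁, hz₁Ω, hz₁ne⟩
  have hΩm : MeasurableSet Ω := hΩo.measurableSet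
  set g : ℂ → ℝ := fun z => (‖wdz h z‖) ^ 2 + (‖wdzbar h z‖) ^ 2 with hgdef
  have hg0 : ∀ z, 0 ≤ g z := fun z => by positivity
  set q : ℂ → ℂ := fun z => wdzbar ξ z with hqdef
  set p : ℂ → ℂ := fun z => wdz ξ z with hpdef
  set Jac : ℂ → ℝ := fun z => (‖p z‖)^2 - (‖q z‖)^2 with hJacdef
  have hJpos : ∀ z ∈ Ω, 0 < Jac z := fun z hz => hξ.jac_pos z hz
  have hdh : ∀ w ∈ Ω, DifferentiableAt ℝ h w := fun w hw =>
    (hh.differentiableOn one_ne_zero).differentiableAt (hΩo.mem_nhds hw)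
  have hdξ : ∀ z ∈ Ω, DifferentiableAt ℝ ξ z := fun z hz =>
    (hξ.contDiffOn.differentiableOn one_ne_zero).differentiableAt (hΩo.mem_nhds hz)
  have hmaps := hξ.bijOn.mapsTo
  -- chain rule for the Wirtinger derivatives of the composition
  have hwdzc : ∀ z ∈ Ω, wdz (h ∘ ξ) z
      = wdz h (ξ z) * p z + wdzbar h (ξ z) * (starRingEnd ℂ) (q z) := by
    intro z hz
    rw [wdz_eq_wA, fderiv_comp z (hdh _ (hmaps hz)) (hdξ z hz), wA_comp]
    rfl
  have hwdzbarc : ∀ z ∈ Ω, wdzbar (h ∘ ξ) z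
      = wdz h (ξ z) * q z + wdzbar h (ξ z) * (starRingEnd ℂ) (p z) := by
    intro z hz
    rw [wdzbar_eq_wB, fderiv_comp z (hdh _ (hmaps hz)) (hdξ z hz), wB_comp]
    rfl
  set F : ℂ → ℝ := fun z => g (ξ z) * (2*(‖q z‖)^2) with hFdef
  have hF0 : ∀ z, 0 ≤ F z := fun z => mul_nonneg (hg0 _) (by positivity)
  have hdens : ∀ z ∈ Ω,
      (‖wdz (h ∘ ξ) z‖)^2 + (‖wdzbar (h ∘ ξ) z‖)^2
        = Jac z * g (ξ z) + F z := by
    intro z hz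
    rw [hwdzc z hz, hwdzbarc z hz, density_identity _ _ _ _ (hHopf _ (hmaps hz))]
    simp only [hgdef, hJacdef, hFdef]; ring
  -- Jacobian determinant
  have hdet : ∀ z ∈ Ω, |(fderiv ℝ ξ z).det| = Jac z := by
    intro z hz
    rw [det_eq_wA_wB, abs_of_pos]
    · rfl
    · exact hJpos z hz
  -- change of variables on Ω
  have hfd : ∀ z ∈ Ω, HasFDerivWithinAt ξ (fderiv ℝ ξ z) Ω z := fun z hz =>
    (hdξ z hz).hasFDerivAt.hasFDerivWithinAt
  have hinj := hξ.bijOn.injOn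
  have himg := hξ.bijOn.image_eq
  have hCOV : ∫ z in Ω, g z = ∫ z in Ω, Jac z * g (ξ z) := by
    conv_lhs => rw [← himg]
    rw [integral_image_eq_integral_abs_det_fderiv_smul volume hΩm hfd hinj g]
    refine setIntegral_congr_fun hΩm (fun z hz => ?_)
    rw [hdet z hz, smul_eq_mul]
  have hCOVint : IntegrableOn (fun z => Jac z * g (ξ z)) Ω volume := by
    have h0 : IntegrableOn (fun z => |(fderiv ℝ ξ z).det| • g (ξ z)) Ω volume :=
      (integrableOn_image_iff_integrableOn_abs_det_fderiv_smul volume hΩm hfd hinj g).mp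
        (by rw [himg]; exact hfin)
    exact h0.congr_fun (fun z hz => by dsimp only; rw [hdet z hz, smul_eq_mul]) hΩm
  -- identity outside a compact set
  obtain ⟨K, hKc, hKΩ, hKid⟩ := hξ.eq_id
  have hqK : ∀ z ∉ K, q z = 0 := by
    intro z hz
    have hev : ξ =ᶠ[nhds z] id :=
      Filter.eventuallyEq_of_mem (hKc.isClosed.isOpen_compl.mem_nhds hz) (fun w hw => hKid w hw)
    show wB (fderiv ℝ ξ z) = 0
    rw [hev.fderiv_eq, fderiv_id]
    simp [wB, Complex.I_mul_I]
  -- continuity of the derivative data on Ω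
  have hcf : ContinuousOn (fderiv ℝ ξ) Ω := hξ.contDiffOn.continuousOn_fderiv_of_isOpen hΩo le_rfl
  have hc1 : ContinuousOn (fun z => fderiv ℝ ξ z 1) Ω := hcf.clm_apply continuousOn_const
  have hcI : ContinuousOn (fun z => fderiv ℝ ξ z Complex.I) Ω := hcf.clm_apply continuousOn_const
  have hpc : ContinuousOn p Ω := continuousOn_const.mul (hc1.sub (continuousOn_const.mul hcI))
  have hqc : ContinuousOn q Ω := continuousOn_const.mul (hc1.add (continuousOn_const.mul hcI))
  have hpc2 : ContinuousOn (fun z => (‖p z‖)^2) Ω :=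
    (continuous_norm.comp_continuousOn hpc).pow 2
  have hqc2 : ContinuousOn (fun z => (‖q z‖)^2) Ω :=
    (continuous_norm.comp_continuousOn hqc).pow 2
  have hJc : ContinuousOn Jac Ω := hpc2.sub hqc2
  have h2qc : ContinuousOn (fun z => 2*(‖q z‖)^2) Ω := continuousOn_const.mul hqc2
  -- bound for F in terms of the Jacobian term
  obtain ⟨C, hC⟩ := hKc.exists_bound_of_continuousOn
    (((h2qc.mono hKΩ).div (hJc.mono hKΩ)) (fun z hz => (hJpos z (hKΩ hz)).ne'))
  set C' : ℝ := max C 0 with hC'def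
  have hC'0 : (0:ℝ) ≤ C' := le_max_right _ _
  have hbound : ∀ z ∈ Ω, F z ≤ C' * (Jac z * g (ξ z)) := by
    intro z hz
    by_cases hzK : z ∈ K
    · have hJz := hJpos z hz
      have h2 : 2*(‖q z‖)^2 / Jac z ≤ C' := by
        have := hC z hzK
        rw [Real.norm_eq_abs] at this
        exact le_trans (le_trans (le_abs_self _) this) (le_max_left _ _)
      have h1 : 2*(‖q z‖)^2 ≤ C' * Jac z := by
        rw [div_le_iff₀ hJz] at h2; linarith
      calc F z = g (ξ z) * (2*(‖q z‖)^2) := rfl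
        _ ≤ g (ξ z) * (C' * Jac z) := mul_le_mul_of_nonneg_left h1 (hg0 _)
        _ = C' * (Jac z * g (ξ z)) := by ring
    · have : F z = 0 := by
        show g (ξ z) * (2*(‖q z‖)^2) = 0
        rw [hqK z hzK]; simp
      rw [this]
      exact mul_nonneg hC'0 (mul_nonneg (hJpos z hz).le (hg0 _))
  -- measurability
  have hgm : Measurable g := by
    have m1 : Measurable fun z => fderiv ℝ h z 1 := measurable_fderiv_apply_const ℝ h 1
    have mI : Measurable fun z => fderiv ℝ h z Complex.I := measurable_fderiv_apply_const ℝ h Complex.I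
    have ma : Measurable fun z => wdz h z := measurable_const.mul (m1.sub (measurable_const.mul mI))
    have mb : Measurable fun z => wdzbar h z := measurable_const.mul (m1.add (measurable_const.mul mI))
    exact ((continuous_norm.measurable.comp ma).pow_const 2).add
      ((continuous_norm.measurable.comp mb).pow_const 2)
  have hqm : Measurable fun z => (‖q z‖)^2 := by
    have m1 : Measurable fun z => fderiv ℝ ξ z 1 := measurable_fderiv_apply_const ℝ ξ 1
    have mI : Measurable fun z => fderiv ℝ ξ z Complex.I := measurable_fderiv_apply_const ℝ ξ Complex.I
    have mb : Measurable q := measurable_const.mul (m1.add (measurable_const.mul mI))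
    exact (continuous_norm.measurable.comp mb).pow_const 2
  have hξae : AEMeasurable ξ (volume.restrict Ω) := hξ.contDiffOn.continuousOn.aemeasurable hΩm
  have hFm : AEStronglyMeasurable F (volume.restrict Ω) :=
    ((hgm.comp_aemeasurable hξae).mul
      ((measurable_const.mul hqm).aemeasurable)).aestronglyMeasurable
  -- integrability of F
  have hFint : IntegrableOn F Ω volume := by
    refine Integrable.mono (hCOVint.const_mul C') hFm ?_
    refine (ae_restrict_iff' hΩm).mpr (Filter.Eventually.of_forall (fun z hz => ?_))
    rw [Real.norm_eq_abs, Real.norm_eq_abs, _root_.abs_of_nonneg (hF0 z)]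
    exact le_trans (hbound z hz) (le_abs_self _)
  -- energy splitting
  have hsplit : energy Ω (h ∘ ξ) = energy Ω h + ∫ z in Ω, F z := by
    have e1 : energy Ω (h ∘ ξ) = ∫ z in Ω, (Jac z * g (ξ z) + F z) :=
      setIntegral_congr_fun hΩm (fun z hz => hdens z hz)
    have e2 : energy Ω h = ∫ z in Ω, g z := rfl
    rw [e1, integral_add hCOVint hFint, e2, hCOV]
  rw [hsplit]
  have hpos : 0 < ∫ z in Ω, F z := by
    by_cases hqz : ∀ z ∈ Ω, q z = 0
    · -- then ξ is holomorphic, hence the identity: contradiction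
      exfalso
      have hdiff : DifferentiableOn ℂ ξ Ω := by
        intro z hz
        have hL : ((p z) • (1 : ℂ →L[ℂ] ℂ)).restrictScalars ℝ = fderiv ℝ ξ z := by
          ext v
          show p z * v = fderiv ℝ ξ z v
          rw [wA_wB_apply (fderiv ℝ ξ z) v]
          have hqz' : wB (fderiv ℝ ξ z) = 0 := hqz z hz
          rw [hqz', zero_mul, add_zero]
          rfl
        exact (hasFDerivAt_of_restrictScalars ℝ ((hdξ z hz).hasFDerivAt)
          hL).differentiableAt.differentiableWithinAt
      have hana : AnalyticOnNhd ℂ ξ Ω := hdiff.analyticOnNhd hΩo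
      have hid : AnalyticOnNhd ℂ (id : ℂ → ℂ) Ω :=
        (differentiable_id.differentiableOn).analyticOnNhd hΩo
      have hz₀ : ∃ z₀ ∈ Ω, z₀ ∉ K := by
        by_contra hcon
        push_neg at hcon
        have hΩK : Ω = K := le_antisymm hcon hKΩ
        have hclopen : IsClopen Ω := ⟨hΩK ▸ hKc.isClosed, hΩo⟩
        rcases isClopen_iff.mp hclopen with he | hu
        · exact (he ▸ hΩc.nonempty).ne_empty rfl
        · rw [hu] at hΩb
          obtain ⟨C0, hC0⟩ := Metric.isBounded_iff.mp hΩb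
          have h2 := hC0 (mem_univ (0:ℂ)) (mem_univ ((|C0|+1 : ℝ) : ℂ))
          rw [Complex.dist_eq] at h2
          simp only [zero_sub, norm_neg, Complex.norm_real, Real.norm_eq_abs] at h2
          have h3 : |(|C0| + 1 : ℝ)| = |C0| + 1 := _root_.abs_of_nonneg (by positivity)
          rw [h3] at h2
          linarith [le_abs_self C0]
      obtain ⟨z₀, hz₀Ω, hz₀K⟩ := hz₀
      have hev : ξ =ᶠ[nhds z₀] id :=
        Filter.eventuallyEq_of_mem (hKc.isClosed.isOpen_compl.mem_nhds hz₀K)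
          (fun w hw => hKid w hw)
      have heq := hana.eqOn_of_preconnected_of_eventuallyEq hid hΩc.isPreconnected hz₀Ω hev
      exact hz₁ne (heq hz₁Ω)
    · push_neg at hqz
      obtain ⟨z₀, hz₀Ω, hqz₀⟩ := hqz
      have hU : IsOpen (Ω ∩ q ⁻¹' ({0}ᶜ)) :=
        hqc.isOpen_inter_preimage hΩo (isOpen_compl_singleton)
      obtain ⟨ε, hε, hball⟩ := Metric.isOpen_iff.mp hU z₀ ⟨hz₀Ω, hqz₀⟩
      set B := Metric.closedBall z₀ (ε/2) with hBdef
      have hBsub : B ⊆ Ω ∩ q ⁻¹' ({0}ᶜ) :=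
        subset_trans (Metric.closedBall_subset_ball (by linarith)) hball
      have hBΩ : B ⊆ Ω := fun z hz => (hBsub hz).1
      have hBc : IsCompact B := isCompact_closedBall _ _
      have hBm : MeasurableSet B := measurableSet_closedBall
      have hBne : B.Nonempty := ⟨z₀, Metric.mem_closedBall_self (by linarith)⟩
      have hμB : 0 < volume B := Metric.measure_closedBall_pos volume z₀ (by linarith)
      obtain ⟨zm, hzmB, hzm⟩ := hBc.exists_isMinOn hBne (h2qc.mono hBΩ)
      obtain ⟨zM, hzMB, hzM⟩ := hBc.exists_isMaxOn hBne (hJc.mono hBΩ)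
      obtain ⟨zd, hzdB, hzd⟩ := hBc.exists_isMinOn hBne (hJc.mono hBΩ)
      have hc₁ : 0 < 2*(‖q zm‖)^2 := by
        have hne : q zm ≠ 0 := (hBsub hzmB).2
        have := norm_pos_iff.mpr hne
        positivity
      have hc₂ : 0 < Jac zM := hJpos zM (hBΩ hzMB)
      set c : ℝ := (2*(‖q zm‖)^2) / Jac zM with hcdef
      have hc : 0 < c := div_pos hc₁ hc₂
      have hlow : ∀ z ∈ B, c * (Jac z * g (ξ z)) ≤ F z := by
        intro z hz
        have h1 : Jac z ≤ Jac zM := hzM hz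
        have h2 : 2*(‖q zm‖)^2 ≤ 2*(‖q z‖)^2 := hzm hz
        have h3 : c * Jac z ≤ 2*(‖q z‖)^2 := by
          rw [hcdef, div_mul_eq_mul_div, div_le_iff₀ hc₂]
          nlinarith [hJpos z (hBΩ hz), hc₁]
        calc c * (Jac z * g (ξ z)) = (c * Jac z) * g (ξ z) := by ring
          _ ≤ (2*(‖q z‖)^2) * g (ξ z) := mul_le_mul_of_nonneg_right h3 (hg0 _)
          _ = F z := by rw [hFdef]; ring
      -- change of variables on B
      have hfdB : ∀ z ∈ B, HasFDerivWithinAt ξ (fderiv ℝ ξ z) B z := fun z hz =>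
        (hdξ z (hBΩ hz)).hasFDerivAt.hasFDerivWithinAt
      have hinjB := hinj.mono hBΩ
      have hCOVB : ∫ z in ξ '' B, g z = ∫ z in B, Jac z * g (ξ z) := by
        rw [integral_image_eq_integral_abs_det_fderiv_smul volume hBm hfdB hinjB g]
        exact setIntegral_congr_fun hBm (fun z hz => by rw [hdet z (hBΩ hz), smul_eq_mul])
      -- the image has positive measure
      have hδ : 0 < Jac zd := hJpos zd (hBΩ hzdB)
      have hμS : 0 < volume (ξ '' B) := by
        have hl := lintegral_image_eq_lintegral_abs_det_fderiv_mul volume hBm hfdB hinjB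
          (fun _ => 1)
        rw [setLIntegral_one] at hl
        have hge : ∫⁻ _ in B, ENNReal.ofReal (Jac zd) ∂volume
            ≤ ∫⁻ z in B, ENNReal.ofReal |(fderiv ℝ ξ z).det| * 1 ∂volume := by
          refine setLIntegral_mono' hBm (fun z hz => ?_)
          rw [mul_one, hdet z (hBΩ hz)]
          exact ENNReal.ofReal_le_ofReal (hzd hz)
        rw [setLIntegral_const] at hge
        have hlb : 0 < ENNReal.ofReal (Jac zd) * volume B :=
          ENNReal.mul_pos (ne_of_gt (ENNReal.ofReal_pos.mpr hδ)) hμB.ne'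
        rw [hl]
        exact lt_of_lt_of_le hlb hge
      have hSsub : ξ '' B ⊆ Ω := by rw [← himg]; exact image_mono hBΩ
      have hSm : MeasurableSet (ξ '' B) :=
        hBm.image_of_continuousOn_injOn (hξ.contDiffOn.continuousOn.mono hBΩ) hinjB
      -- g is a.e. positive on the image
      have hgneΩ : ∀ᵐ z ∂(volume.restrict Ω), g z ≠ 0 := by
        filter_upwards [hD] with z hz
        intro hgz
        apply hz
        have hgz' : ‖wdz h z‖ ^ 2 + ‖wdzbar h z‖ ^ 2 = 0 := hgz
        have ha : ‖wdz h z‖ ^ 2 = 0 ∧ ‖wdzbar h z‖ ^ 2 = 0 := by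
          constructor <;>
            nlinarith [sq_nonneg (‖wdz h z‖), sq_nonneg (‖wdzbar h z‖)]
        have ha1 : wdz h z = 0 := by
          have := pow_eq_zero_iff (n := 2) (by norm_num) |>.mp ha.1
          exact norm_eq_zero.mp this
        have ha2 : wdzbar h z = 0 := by
          have := pow_eq_zero_iff (n := 2) (by norm_num) |>.mp ha.2
          exact norm_eq_zero.mp this
        exact eq_zero_of_wA_wB _ ha1 ha2
      have hgneS : ∀ᵐ z ∂(volume.restrict (ξ '' B)), g z ≠ 0 :=
        ae_restrict_of_ae_restrict_of_subset hSsub hgneΩ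
      have hgiS : IntegrableOn g (ξ '' B) volume := hfin.mono_set hSsub
      have hgS : 0 < ∫ z in ξ '' B, g z := by
        rw [setIntegral_pos_iff_support_of_nonneg_ae
          (Filter.Eventually.of_forall (fun z => hg0 z)) hgiS]
        have hnull : volume ((ξ '' B) \ Function.support g) = 0 := by
          have h1 := (ae_restrict_iff' hSm).mp hgneS
          refine measure_mono_null ?_ (ae_iff.mp h1)
          intro z hz
          simp only [mem_setOf_eq, Classical.not_imp, not_not]
          exact ⟨hz.1, by simpa [Function.mem_support, not_not] using hz.2⟩
        have hsplit2 : volume (ξ '' B) ≤ volume (Function.support g ∩ ξ '' B) := by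
          have : ξ '' B ⊆ (Function.support g ∩ ξ '' B) ∪ ((ξ '' B) \ Function.support g) := by
            intro z hz
            by_cases hzs : z ∈ Function.support g
            · exact Or.inl ⟨hzs, hz⟩
            · exact Or.inr ⟨hz, hzs⟩
          calc volume (ξ '' B) ≤ volume ((Function.support g ∩ ξ '' B) ∪ ((ξ '' B) \ Function.support g)) := measure_mono this
            _ ≤ volume (Function.support g ∩ ξ '' B) + volume ((ξ '' B) \ Function.support g) := measure_union_le _ _
            _ = volume (Function.support g ∩ ξ '' B) := by rw [hnull, add_zero]
        exact lt_of_lt_of_le hμS hsplit2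
      -- conclude positivity
      have h1 : ∫ z in B, c * (Jac z * g (ξ z)) ∂volume ≤ ∫ z in B, F z ∂volume :=
        setIntegral_mono_on ((hCOVint.mono_set hBΩ).const_mul c) (hFint.mono_set hBΩ) hBm hlow
      have h2 : ∫ z in B, c * (Jac z * g (ξ z)) ∂volume
          = c * ∫ z in B, Jac z * g (ξ z) ∂volume := integral_const_mul c _
      rw [h2, ← hCOVB] at h1
      have h3 : 0 < c * ∫ z in ξ '' B, g z := mul_pos hc hgS
      have h4 : ∫ z in B, F z ∂volume ≤ ∫ z in Ω, F z ∂volume :=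
        setIntegral_mono_set hFint (Filter.Eventually.of_forall (fun z => hF0 z))
          (HasSubset.Subset.eventuallyLE hBΩ)
      linarith
  linarith
end

section
/- Let 0 < r < 1 and let A = { z ∈ ℂ : r < |z| < 1 } be the annulus. The map h(z) = z/|z| is smooth on A and its Hopf product is the holomorphic function h_z(z)·conj(h_z̄(z)) = −1/(4z²) for every z ∈ A; in particular, h is Hopf harmonic on A. -/
open Complex MeasureTheory Set

lemma fun_eq : (fun w : ℂ => w / ((‖w‖ : ℝ) : ℂ)) =
    fun w => (Real.sqrt (Complex.normSq w))⁻¹ • w := by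
  funext w
  rw [Complex.real_smul, div_eq_inv_mul, Complex.ofReal_inv, Complex.norm_def]

lemma key (z : ℂ) (hz : z ≠ 0) :
    HasFDerivAt (fun w : ℂ => w / ((‖w‖ : ℝ) : ℂ))
      ((Real.sqrt (Complex.normSq z))⁻¹ •
          (ContinuousLinearMap.id ℝ ℂ) +
        (ContinuousLinearMap.smulRight
          ((-((Real.sqrt (Complex.normSq z)) ^ 2)⁻¹ * (1 / (2 * Real.sqrt (Complex.normSq z)))) •
            ((z.re • Complex.reCLM + z.re • Complex.reCLM) +
             (z.im • Complex.imCLM + z.im • Complex.imCLM))) z)) z := by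
  rw [fun_eq]
  have hns : Complex.normSq z ≠ 0 := by simpa using hz
  have hs : Real.sqrt (Complex.normSq z) ≠ 0 := by
    have : 0 < Complex.normSq z := Complex.normSq_pos.mpr hz
    positivity
  have hN : HasFDerivAt Complex.normSq
      ((z.re • Complex.reCLM + z.re • Complex.reCLM) +
       (z.im • Complex.imCLM + z.im • Complex.imCLM)) z := by
    have h1 : HasFDerivAt (fun w : ℂ => w.re * w.re)
        (z.re • Complex.reCLM + z.re • Complex.reCLM) z :=
      (Complex.reCLM.hasFDerivAt).mul (Complex.reCLM.hasFDerivAt)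
    have h2 : HasFDerivAt (fun w : ℂ => w.im * w.im)
        (z.im • Complex.imCLM + z.im • Complex.imCLM) z :=
      (Complex.imCLM.hasFDerivAt).mul (Complex.imCLM.hasFDerivAt)
    have e : (⇑Complex.normSq) = (fun w : ℂ => w.re * w.re) + (fun w : ℂ => w.im * w.im) := by
      funext w; simp [Complex.normSq_apply]
    rw [e]; exact h1.add h2
  have hq : HasDerivAt (fun t : ℝ => (Real.sqrt t)⁻¹)
      (-((Real.sqrt (Complex.normSq z)) ^ 2)⁻¹ * (1 / (2 * Real.sqrt (Complex.normSq z))))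
      (Complex.normSq z) := by
    have := (hasDerivAt_inv hs).comp (Complex.normSq z) (Real.hasDerivAt_sqrt hns)
    simpa [Function.comp_def] using this
  have hgi : HasFDerivAt (fun w : ℂ => (Real.sqrt (Complex.normSq w))⁻¹)
      ((-((Real.sqrt (Complex.normSq z)) ^ 2)⁻¹ * (1 / (2 * Real.sqrt (Complex.normSq z)))) •
        ((z.re • Complex.reCLM + z.re • Complex.reCLM) +
         (z.im • Complex.imCLM + z.im • Complex.imCLM))) z := by
    exact hq.comp_hasFDerivAt z hN
  exact hgi.smul (hasFDerivAt_id z)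

lemma wdz_eq (z : ℂ) (hz : z ≠ 0) :
    wdz (fun w : ℂ => w / ((‖w‖ : ℝ) : ℂ)) z = (((2 * ‖z‖)⁻¹ : ℝ) : ℂ) := by
  have hk := key z hz
  have hf := hk.fderiv
  set s := Real.sqrt (Complex.normSq z) with hsdef
  have hs : s ≠ 0 := by
    have : 0 < Complex.normSq z := Complex.normSq_pos.mpr hz
    rw [hsdef]; positivity
  have habs : ‖z‖ = s := Complex.norm_def z
  rw [wdz, hf]
  simp [ContinuousLinearMap.add_apply, ContinuousLinearMap.smul_apply,
    ContinuousLinearMap.smulRight_apply, Complex.real_smul, habs]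
  have hz' : (↑z.re + ↑z.im * I : ℂ) = z := Complex.re_add_im z
  have hs2 : (s:ℂ)^2 = (z.re:ℂ)^2 + (z.im:ℂ)^2 := by
    have hr : s^2 = z.re^2 + z.im^2 := by
      rw [hsdef, Real.sq_sqrt (Complex.normSq_nonneg z), Complex.normSq_apply]; ring
    exact_mod_cast hr
  have hsC : (s:ℂ) ≠ 0 := by exact_mod_cast hs
  rw [← hz']
  field_simp
  rw [hz']
  linear_combination 2*((z.re:ℂ) - I*(z.im:ℂ))*hz' + 2*hs2 + (2*(z.im:ℂ)^2 - 2*(s:ℂ)^2) * Complex.I_sq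

lemma wdzbar_eq (z : ℂ) (hz : z ≠ 0) :
    wdzbar (fun w : ℂ => w / ((‖w‖ : ℝ) : ℂ)) z =
      -z ^ 2 / (2 * ((‖z‖ : ℝ) : ℂ) ^ 3) := by
  have hk := key z hz
  have hf := hk.fderiv
  set s := Real.sqrt (Complex.normSq z) with hsdef
  have hs : s ≠ 0 := by
    have : 0 < Complex.normSq z := Complex.normSq_pos.mpr hz
    rw [hsdef]; positivity
  have habs : ‖z‖ = s := Complex.norm_def z
  rw [wdzbar, hf]
  simp [ContinuousLinearMap.add_apply, ContinuousLinearMap.smul_apply,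
    ContinuousLinearMap.smulRight_apply, Complex.real_smul, habs]
  have hz' : (↑z.re + ↑z.im * I : ℂ) = z := Complex.re_add_im z
  have hs2 : (s:ℂ)^2 = (z.re:ℂ)^2 + (z.im:ℂ)^2 := by
    have hr : s^2 = z.re^2 + z.im^2 := by
      rw [hsdef, Real.sq_sqrt (Complex.normSq_nonneg z), Complex.normSq_apply]; ring
    exact_mod_cast hr
  have hsC : (s:ℂ) ≠ 0 := by exact_mod_cast hs
  rw [← hz']
  field_simp
  ring_nf
  have e7 : (s:ℂ)^7 * ((s:ℂ)⁻¹)^7 = 1 := by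
    rw [← mul_pow, mul_inv_cancel₀ hsC, one_pow]
  have e9 : (s:ℂ)^9 * ((s:ℂ)⁻¹)^7 = (s:ℂ)^2 := by
    have : (s:ℂ)^9 = (s:ℂ)^2 * (s:ℂ)^7 := by ring
    rw [this, mul_assoc, e7, mul_one]
  rw [hz']
  linear_combination 2*(s:ℂ)^2*Complex.I_sq

lemma smooth_h (z : ℂ) (hz : z ≠ 0) :
    ContDiffAt ℝ (⊤ : ℕ∞) (fun w : ℂ => w / ((‖w‖ : ℝ) : ℂ)) z := by
  rw [fun_eq]
  have hns : Complex.normSq z ≠ 0 := by simpa using hz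
  have hnormSq : ContDiff ℝ (⊤ : ℕ∞) Complex.normSq := by
    have : Complex.normSq = fun w : ℂ => w.re * w.re + w.im * w.im := by
      funext w; simp [Complex.normSq_apply]
    rw [this]
    exact (Complex.reCLM.contDiff.mul Complex.reCLM.contDiff).add
      (Complex.imCLM.contDiff.mul Complex.imCLM.contDiff)
  have hsqrt : ContDiffAt ℝ (⊤ : ℕ∞) (fun w : ℂ => Real.sqrt (Complex.normSq w)) z :=
    (Real.contDiffAt_sqrt hns).comp z hnormSq.contDiffAt
  have hs : Real.sqrt (Complex.normSq z) ≠ 0 := by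
    have : 0 < Complex.normSq z := Complex.normSq_pos.mpr hz
    positivity
  exact (hsqrt.inv hs).smul contDiffAt_id

lemma hopf (z : ℂ) (hz : z ≠ 0) :
    wdz (fun w : ℂ => w / ((‖w‖ : ℝ) : ℂ)) z *
      (starRingEnd ℂ) (wdzbar (fun w : ℂ => w / ((‖w‖ : ℝ) : ℂ)) z) =
      -1 / (4 * z ^ 2) := by
  rw [wdz_eq z hz, wdzbar_eq z hz]
  have hsC : ((‖z‖ : ℝ) : ℂ) ≠ 0 := by
    simpa using (norm_ne_zero_iff.mpr hz)
  have hzc : z * (starRingEnd ℂ) z = ((‖z‖ : ℝ) : ℂ)^2 := by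
    rw [Complex.mul_conj]
    norm_cast
    exact (Complex.sq_norm z).symm
  simp only [map_div₀, map_neg, map_pow, map_mul, Complex.conj_ofReal, map_ofNat]
  push_cast
  field_simp
  linear_combination (-4*z*(starRingEnd ℂ) z - 4 * ((‖z‖:ℝ):ℂ)^2) * hzc

/-- On the annulus `A = {r < |z| < 1}`, the map `h(z) = z/|z|` is
smooth, its Hopf product equals `-1/(4z²)`, and hence `h` is Hopf harmonic on `A`. -/
theorem stmt_18 (r : ℝ) (hr0 : 0 < r) (hr1 : r < 1)
    (A : Set ℂ) (hA : A = {z : ℂ | r < ‖z‖ ∧ ‖z‖ < 1})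
    (h : ℂ → ℂ) (hdef : h = fun z => z / ((‖z‖ : ℝ) : ℂ)) :
    ContDiffOn ℝ (⊤ : ℕ∞) h A ∧
    (∀ z ∈ A, wdz h z * (starRingEnd ℂ) (wdzbar h z) = -1 / (4 * z ^ 2)) ∧
    IsHopfHarmonic A h := by
  subst hdef hA
  have hne : ∀ z : ℂ, z ∈ {z : ℂ | r < ‖z‖ ∧ ‖z‖ < 1} → z ≠ 0 := by
    intro z hz h0
    rw [h0] at hz
    simp at hz
    linarith
  have hsmooth : ContDiffOn ℝ (⊤ : ℕ∞) (fun z : ℂ => z / ((‖z‖ : ℝ) : ℂ))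
      {z : ℂ | r < ‖z‖ ∧ ‖z‖ < 1} := by
    intro z hz
    exact (smooth_h z (hne z hz)).contDiffWithinAt
  have hprod : ∀ z ∈ {z : ℂ | r < ‖z‖ ∧ ‖z‖ < 1},
      wdz (fun w : ℂ => w / ((‖w‖ : ℝ) : ℂ)) z *
        (starRingEnd ℂ) (wdzbar (fun w : ℂ => w / ((‖w‖ : ℝ) : ℂ)) z) =
        -1 / (4 * z ^ 2) := fun z hz => hopf z (hne z hz)
  refine ⟨hsmooth, hprod, ?_, ?_⟩
  · exact hsmooth.of_le (by exact_mod_cast le_top)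
  · refine DifferentiableOn.congr (f := fun z : ℂ => -1 / (4 * z ^ 2)) ?_ hprod
    apply DifferentiableOn.div (differentiableOn_const _)
    · exact (differentiableOn_const (4:ℂ)).mul (differentiable_id.differentiableOn.pow 2)
    · intro z hz
      exact mul_ne_zero (by norm_num) (pow_ne_zero 2 (hne z hz))
end
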